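/- For every prime p ≥ 3 and every positive integer n, T_p(n) := ∏_{j=0}^{n−1} (pj+1)!/(n+j)! is an integer; moreover ν_p(T_p(pn)) = p·ν_p(T_p(n)) + p(p−3)n²/2, and consequently ν_p(T_p(p^n)) = p^n(p−3)(p^n−1)/(2(p−1)). -/

import Mathlib

open Nat Finset

/-- The ASM counting sequence `T(n) = ∏_{j=0}^{n-1} (3j+1)!/(n+j)!`. -/
def T (n : ℕ) : ℚ := ∏ j ∈ Finset.range n, ((3 * j + 1)! : ℚ) / ((n + j)! : ℚ)

/-- The Jacobsthal numbers: `J 0 = J 1 = 1`, `J (n+2) = J (n+1) + 2 * J n`. -/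
def J : ℕ → ℕ
  | 0 => 1
  | 1 => 1
  | (n + 2) => J (n + 1) + 2 * J n

/-- Sum of the base-`p` digits of `n`. -/
def S (p n : ℕ) : ℕ := (Nat.digits p n).sum

/-- The generalized sequence `T_p(n) = ∏_{j=0}^{n-1} (pj+1)!/(n+j)!`. -/
def Tp (p n : ℕ) : ℚ := ∏ j ∈ Finset.range n, ((p * j + 1)! : ℚ) / ((n + j)! : ℚ)


/-- indicator sum -/
lemma my_sum_indicator (n c : ℕ) :
    ∑ j ∈ Finset.range n, (if c ≤ j then 1 else 0) = n - min n c := by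
  induction n with
  | zero => simp
  | succ n ih => rw [Finset.sum_range_succ, ih]; split <;> omega

lemma my_div3_eq {m : ℕ} (hm : 0 < m) {x : ℕ} (hx : x < 3 * m) :
    x / m = (if m ≤ x then 1 else 0) + (if 2 * m ≤ x then 1 else 0) := by
  rcases lt_or_ge x m with h1 | h1
  · rw [Nat.div_eq_of_lt h1]; split_ifs <;> omega
  rcases lt_or_ge x (2 * m) with h2 | h2
  · rw [Nat.div_eq_of_lt_le (by omega : 1 * m ≤ x) (by omega)]; split_ifs <;> omega
  · rw [Nat.div_eq_of_lt_le (by omega : 2 * m ≤ x) (by omega)]; split_ifs <;> omega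

/-- base case of the floor-sum inequality, for `n ≤ m`. -/
lemma my_div_base {m n : ℕ} (hm : 0 < m) (hnm : n ≤ m) :
    ∑ j ∈ range n, (n + j) / m ≤ ∑ j ∈ range n, (3 * j + 1) / m := by
  have hL : ∑ j ∈ range n, (n + j) / m
      = ∑ j ∈ range n, (if m - n ≤ j then 1 else 0) := by
    refine Finset.sum_congr rfl fun j hj => ?_
    have hj' := Finset.mem_range.1 hj
    rcases lt_or_ge (n + j) m with h | h
    · rw [Nat.div_eq_of_lt h]; split_ifs <;> omega
    · rw [Nat.div_eq_of_lt_le (by omega : 1 * m ≤ n + j) (by omega)]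
      split_ifs <;> omega
  have hR : ∑ j ∈ range n, (3 * j + 1) / m
      = (∑ j ∈ range n, (if (m+1)/3 ≤ j then 1 else 0))
        + ∑ j ∈ range n, (if (2*m+1)/3 ≤ j then 1 else 0) := by
    rw [← Finset.sum_add_distrib]
    refine Finset.sum_congr rfl fun j hj => ?_
    have hj' := Finset.mem_range.1 hj
    rw [my_div3_eq hm (by omega)]
    have e1 : (if m ≤ 3*j+1 then (1:ℕ) else 0) = (if (m+1)/3 ≤ j then 1 else 0) := by
      split_ifs <;> omega
    have e2 : (if 2*m ≤ 3*j+1 then (1:ℕ) else 0) = (if (2*m+1)/3 ≤ j then 1 else 0) := by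
      split_ifs <;> omega
    rw [e1, e2]
  rw [hL, hR, my_sum_indicator, my_sum_indicator, my_sum_indicator]
  omega

/-- sums of a function with period `m`, over a shifted window of length `m`. -/
lemma my_period_sum (m : ℕ) (f : ℕ → ℕ) (hf : ∀ j, f (j + m) = f j) (N : ℕ) :
    ∑ j ∈ range m, f (N + j) = ∑ j ∈ range m, f j := by
  induction N with
  | zero => simp
  | succ N ih =>
    have h1 : ∑ j ∈ range (m+1), f (N + j)
        = (∑ j ∈ range m, f (N + 1 + j)) + f N := by
      rw [Finset.sum_range_succ']
      simp only [Nat.add_zero]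
      congr 1
      exact Finset.sum_congr rfl fun j _ => congrArg f (by omega)
    have h2 : ∑ j ∈ range (m+1), f (N + j)
        = (∑ j ∈ range m, f (N + j)) + f (N + m) := Finset.sum_range_succ _ _
    have h3 : f (N + m) = f N := hf N
    rw [h3] at h2
    have := h1.symm.trans h2
    have h4 : ∑ j ∈ range m, f (N + 1 + j) = ∑ j ∈ range m, f (N + j) := by omega
    rw [← ih, ← h4]

/-- sum over a full window of `j % m` is the triangular number -/
lemma my_mod_window (m N : ℕ) (hm : 0 < m) :
    ∑ j ∈ range m, (N + j) % m = ∑ j ∈ range m, j := by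
  rw [my_period_sum m (· % m) (fun j => Nat.add_mod_right j m) N]
  exact Finset.sum_congr rfl fun j hj => Nat.mod_eq_of_lt (Finset.mem_range.1 hj)

lemma my_L_window (m N : ℕ) :
    ∑ j ∈ range m, (3 * (N + j) + 1) % m = ∑ j ∈ range m, (3 * j + 1) % m := by
  refine my_period_sum m (fun j => (3 * j + 1) % m) (fun j => ?_) N
  show (3 * (j + m) + 1) % m = (3 * j + 1) % m
  rw [show 3 * (j + m) + 1 = (3 * j + 1) + 3 * m from by ring, Nat.add_mul_mod_self_right]

/-- the key sum-of-residues inequality -/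
lemma my_res (m : ℕ) (hm : 0 < m) : ∀ n : ℕ,
    ∑ j ∈ range n, (3 * j + 1) % m ≤ ∑ j ∈ range n, (n + j) % m := by
  have key : ∀ (n : ℕ) (g : ℕ → ℕ), ∑ j ∈ range n, g j
      = m * (∑ j ∈ range n, g j / m) + ∑ j ∈ range n, g j % m := by
    intro n g
    rw [Finset.mul_sum, ← Finset.sum_add_distrib]
    exact Finset.sum_congr rfl fun j _ => (Nat.div_add_mod (g j) m).symm
  have eqsum : ∀ n : ℕ, ∑ j ∈ range n, (3 * j + 1) = ∑ j ∈ range n, (n + j) := by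
    intro n
    have hG := Finset.sum_range_id_mul_two n
    have hG2 : n * (n - 1) = n * n - n := by
      cases n with
      | zero => simp
      | succ k => simp [Nat.mul_succ, Nat.succ_mul]
    have hnn : n ≤ n * n := by
      cases n with
      | zero => simp
      | succ k => exact Nat.le_mul_of_pos_left _ (succ_pos k)
    rw [Finset.sum_add_distrib, Finset.sum_add_distrib, ← Finset.mul_sum,
      Finset.sum_const, Finset.sum_const, card_range]
    simp only [smul_eq_mul, mul_one]
    omega
  intro n
  induction n using Nat.strong_induction_on with
  | _ n ih =>
    rcases le_or_gt n m with h | h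
    · -- base case : use my_div_base and translate via `key`
      have hdiv := my_div_base hm h
      have k1 := key n (fun j => n + j)
      have k2 := key n (fun j => 3 * j + 1)
      have e := eqsum n
      have hmul : m * (∑ j ∈ range n, (n + j) / m) ≤ m * (∑ j ∈ range n, (3 * j + 1) / m) :=
        Nat.mul_le_mul_left m hdiv
      omega
    · -- step : n = k + m
      obtain ⟨k, rfl⟩ : ∃ k, n = k + m := ⟨n - m, by omega⟩
      set n := k + m with hn
      -- RHS:  R n = R k + Tm
      have hRsplit : ∀ N : ℕ, ∑ j ∈ range (N + N), j % m
          = (∑ j ∈ range N, j % m) + ∑ j ∈ range N, (N + j) % m := by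
        intro N; rw [Finset.sum_range_add]
      have hGadd : ∀ N : ℕ, ∑ j ∈ range (N + m), j % m
          = (∑ j ∈ range N, j % m) + ∑ j ∈ range m, j := by
        intro N; rw [Finset.sum_range_add, my_mod_window m N hm]
      have hg1 := hRsplit n
      have hg2 := hRsplit k
      have hgn : ∑ j ∈ range (n + n), j % m
          = (∑ j ∈ range (k + k), j % m) + (∑ j ∈ range m, j) + (∑ j ∈ range m, j) := by
        rw [show n + n = k + k + m + m from by omega, hGadd, hGadd]
      have hgk : ∑ j ∈ range n, j % m
          = (∑ j ∈ range k, j % m) + ∑ j ∈ range m, j := hGadd k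
      -- LHS : L n = L k + Lm
      have hLsplit : ∑ j ∈ range n, (3 * j + 1) % m
          = (∑ j ∈ range k, (3 * j + 1) % m) + ∑ j ∈ range m, (3 * j + 1) % m := by
        rw [hn, Finset.sum_range_add, my_L_window]
      -- Lm ≤ Tm  (instance of ih at m, since R m = Tm)
      have hLm : ∑ j ∈ range m, (3 * j + 1) % m ≤ ∑ j ∈ range m, j := by
        have := ih m (by omega)
        rwa [my_mod_window m m hm] at this
      have hk := ih k (by omega)
      omega




lemma my_key (m n : ℕ) (g : ℕ → ℕ) : ∑ j ∈ range n, g j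
    = m * (∑ j ∈ range n, g j / m) + ∑ j ∈ range n, g j % m := by
  rw [Finset.mul_sum, ← Finset.sum_add_distrib]
  exact Finset.sum_congr rfl fun j _ => (Nat.div_add_mod (g j) m).symm



lemma my_div_key (m n : ℕ) :
    ∑ j ∈ range n, (n + j) / m ≤ ∑ j ∈ range n, (3 * j + 1) / m := by
  rcases Nat.eq_zero_or_pos m with rfl | hm
  · simp
  have hres := my_res m hm n
  have k1 := my_key m n (fun j => n + j)
  have k2 := my_key m n (fun j => 3 * j + 1)
  have e : ∑ j ∈ range n, (3 * j + 1) = ∑ j ∈ range n, (n + j) := by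
    have hG := Finset.sum_range_id_mul_two n
    have hG2 : n * (n - 1) = n * n - n := by
      cases n with
      | zero => simp
      | succ k => simp [Nat.mul_succ, Nat.succ_mul]
    have hnn : n ≤ n * n := by
      cases n with
      | zero => simp
      | succ k => exact Nat.le_mul_of_pos_left _ (succ_pos k)
    rw [Finset.sum_add_distrib, Finset.sum_add_distrib, ← Finset.mul_sum,
      Finset.sum_const, Finset.sum_const, card_range]
    simp only [smul_eq_mul, mul_one]
    omega
  have hmul : m * (∑ j ∈ range n, (n + j) / m) ≤ m * (∑ j ∈ range n, (3 * j + 1) / m) := by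
    omega
  exact Nat.le_of_mul_le_mul_left hmul hm

lemma my_dvd (p : ℕ) (hp : p.Prime) (hp3 : 3 ≤ p) (n : ℕ) :
    (∏ j ∈ range n, (n + j)!) ∣ ∏ j ∈ range n, (p * j + 1)! := by
  have hA : (∏ j ∈ range n, (p * j + 1)!) ≠ 0 :=
    Finset.prod_ne_zero_iff.2 fun j _ => factorial_ne_zero _
  have hB : (∏ j ∈ range n, (n + j)!) ≠ 0 :=
    Finset.prod_ne_zero_iff.2 fun j _ => factorial_ne_zero _
  rw [← Nat.factorization_le_iff_dvd hB hA, Finsupp.le_def]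
  intro q
  by_cases hq : q.Prime
  · haveI := Fact.mk hq
    rw [Nat.factorization_prod (fun x _ => factorial_ne_zero _),
        Nat.factorization_prod (fun x _ => factorial_ne_zero _),
        Finset.sum_apply', Finset.sum_apply']
    set b := p * n + 2 * n + 1 with hb
    calc ∑ j ∈ range n, ((n + j)!).factorization q
        = ∑ j ∈ range n, ∑ i ∈ Finset.Ico 1 b, (n + j) / q ^ i := by
          refine Finset.sum_congr rfl fun j hj => ?_
          have h1 := Nat.log_le_self q (n + j)
          have h2 := Finset.mem_range.1 hj
          rw [Nat.factorization_def _ hq, padicValNat_factorial (show log q (n+j) < b by omega)]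
      _ ≤ ∑ j ∈ range n, ∑ i ∈ Finset.Ico 1 b, (p * j + 1) / q ^ i := by
          rw [Finset.sum_comm (s := range n) (t := Finset.Ico 1 b) (f := fun j i => (n+j)/q^i),
              Finset.sum_comm (s := range n) (t := Finset.Ico 1 b) (f := fun j i => (p*j+1)/q^i)]
          refine Finset.sum_le_sum fun i _ => ?_
          refine le_trans (my_div_key (q ^ i) n) (Finset.sum_le_sum fun j _ => ?_)
          exact Nat.div_le_div_right (by
            have := Nat.mul_le_mul_right j hp3; omega)
      _ = ∑ j ∈ range n, ((p * j + 1)!).factorization q := by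
          refine Finset.sum_congr rfl fun j hj => ?_
          have h1 := Nat.log_le_self q (p * j + 1)
          have h2 := Finset.mem_range.1 hj
          have h3 : p * j ≤ p * n := Nat.mul_le_mul_left p (le_of_lt h2)
          rw [Nat.factorization_def _ hq, padicValNat_factorial (show log q (p*j+1) < b by omega)]
  · simp [Nat.factorization_eq_zero_of_not_prime _ hq]


section
variable {p : ℕ} (hp : p.Prime) (hp3 : 3 ≤ p)
include hp

lemma my_S_base (x r : ℕ) (hr : r < p) : S p (p * x + r) = r + S p x := by
  have hp1 : 1 < p := hp.one_lt
  rcases Nat.eq_zero_or_pos (p * x + r) with h0 | h0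
  · have hx : p * x = 0 ∧ r = 0 := by omega
    have hx0 : x = 0 := by
      rcases Nat.mul_eq_zero.1 hx.1 with h | h
      · omega
      · exact h
    simp [S, hx0, hx.2]
  · unfold S
    rw [Nat.digits_def' hp1 h0, List.sum_cons]
    have e1 : (p * x + r) % p = r := by
      rw [Nat.mul_add_mod, Nat.mod_eq_of_lt hr]
    have e2 : (p * x + r) / p = x := by
      rw [Nat.mul_add_div (by omega), Nat.div_eq_of_lt hr, Nat.add_zero]
    rw [e1, e2]

include hp3

lemma my_legendre (m : ℕ) : ((p : ℤ) - 1) * (padicValNat p (m !) : ℤ) = m - S p m := by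
  haveI := Fact.mk hp
  have h := sub_one_mul_padicValNat_factorial (p := p) m
  have h2 : (p.digits m).sum ≤ m := Nat.digit_sum_le p m
  have h3 : 1 ≤ p := by omega
  have h' := congrArg (fun t : ℕ => (t : ℤ)) h
  simp only [Nat.cast_mul, Nat.cast_sub h2, Nat.cast_sub h3, Nat.cast_one] at h'
  unfold S
  exact h'

end

section
variable (p : ℕ)

/-- integer valuation sum -/
noncomputable def nuZ (n : ℕ) : ℤ :=
  ∑ j ∈ Finset.range n, ((padicValNat p ((p * j + 1)!) : ℤ) - (padicValNat p ((n + j)!) : ℤ))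

/-- digit-sum excess -/
def EE (n : ℕ) : ℤ := ∑ j ∈ Finset.range n, ((S p (n + j) : ℤ) - (S p j : ℤ))

end

section
variable {p : ℕ} (hp : p.Prime) (hp3 : 3 ≤ p)
include hp hp3

omit hp hp3 in
lemma my_gauss (n : ℕ) : 2 * (∑ j ∈ range n, (j : ℤ)) = n * n - n := by
  induction n with
  | zero => simp
  | succ n ih =>
    rw [Finset.sum_range_succ]
    push_cast
    push_cast at ih
    ring_nf
    ring_nf at ih
    linarith

lemma my_lemA (n : ℕ) : 2 * ((p:ℤ) - 1) * nuZ p n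
    = ((p:ℤ) - 3) * n * ((n:ℤ) - 1) - 2 * n + 2 * EE p n := by
  have hterm : ∀ j : ℕ, 2 * ((p:ℤ) - 1) *
      ((padicValNat p ((p * j + 1)!) : ℤ) - (padicValNat p ((n + j)!) : ℤ))
      = 2 * (((p:ℤ) * j + 1) - (1 + (S p j : ℤ))) - 2 * (((n:ℤ) + j) - (S p (n + j) : ℤ)) := by
    intro j
    have h1 := my_legendre hp hp3 (p * j + 1)
    have h2 := my_legendre hp hp3 (n + j)
    have h3 : S p (p * j + 1) = 1 + S p j := my_S_base hp j 1 (by omega)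
    rw [h3] at h1
    push_cast at h1 h2 ⊢
    ring_nf
    ring_nf at h1 h2
    linarith
  unfold nuZ EE
  rw [Finset.mul_sum]
  rw [Finset.sum_congr rfl fun j _ => hterm j]
  rw [Finset.sum_congr rfl (fun j (_ : j ∈ range n) =>
    show 2 * (((p:ℤ) * j + 1) - (1 + (S p j : ℤ))) - 2 * (((n:ℤ) + j) - (S p (n + j) : ℤ))
      = ((2*(p:ℤ) - 2) * j - 2 * (n:ℤ)) + 2 * ((S p (n + j) : ℤ) - (S p j : ℤ)) from by ring)]
  rw [Finset.sum_add_distrib, Finset.sum_sub_distrib, ← Finset.mul_sum, ← Finset.mul_sum,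
    Finset.sum_const, card_range, nsmul_eq_mul]
  have hG := my_gauss n
  have hM : ∑ x ∈ range n, 2 * ((S p (n + x) : ℤ) - (S p x : ℤ))
      = 2 * ∑ x ∈ range n, ((S p (n + x) : ℤ) - (S p x : ℤ)) := (Finset.mul_sum _ _ _).symm
  linear_combination ((p:ℤ) - 1) * hG + hM

omit hp hp3 in
lemma my_sum_range_mul (f : ℕ → ℤ) (n : ℕ) :
    ∑ j ∈ range (p * n), f j = ∑ q ∈ range n, ∑ r ∈ range p, f (p * q + r) := by
  induction n with
  | zero => simp
  | succ n ih =>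
    rw [Nat.mul_succ, Finset.sum_range_add, ih, Finset.sum_range_succ]

omit hp3 in
lemma my_lemB (n : ℕ) : EE p (p * n) = p * EE p n := by
  unfold EE
  rw [my_sum_range_mul]
  have hterm : ∀ q ∈ range n, ∀ r ∈ range p,
      ((S p (p * n + (p * q + r)) : ℤ) - (S p (p * q + r) : ℤ))
      = ((S p (n + q) : ℤ) - (S p q : ℤ)) := by
    intro q _ r hr
    have hr' := Finset.mem_range.1 hr
    have e1 : p * n + (p * q + r) = p * (n + q) + r := by ring
    rw [e1, my_S_base hp (n + q) r hr', my_S_base hp q r hr']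
    push_cast; ring
  rw [Finset.mul_sum]
  refine Finset.sum_congr rfl fun q hq => ?_
  rw [Finset.sum_congr rfl (hterm q hq), Finset.sum_const, card_range]
  push_cast; ring

lemma my_lemC (n : ℕ) : 2 * nuZ p (p * n) = 2 * p * nuZ p n + ((p:ℤ) - 3) * p * n ^ 2 := by
  have h1 := my_lemA hp hp3 (p * n)
  have h2 := my_lemA hp hp3 n
  have h3 := my_lemB hp n
  have hp1 : ((p:ℤ) - 1) ≠ 0 := by
    have : (3:ℤ) ≤ (p:ℤ) := by exact_mod_cast hp3
    omega
  refine mul_left_cancel₀ hp1 ?_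
  push_cast at h1 h2 h3 ⊢
  nlinarith [h1, h2, h3]

end

section Final
variable {p : ℕ} (hp : p.Prime) (hp3 : 3 ≤ p)
include hp

lemma my_val_prod (f g : ℕ → ℕ) (m : ℕ) (hf : ∀ j, f j ≠ 0) (hg : ∀ j, g j ≠ 0) :
    padicValRat p (∏ j ∈ range m, ((f j : ℚ) / (g j : ℚ)))
      = ∑ j ∈ range m, ((padicValNat p (f j) : ℤ) - (padicValNat p (g j) : ℤ)) := by
  haveI := Fact.mk hp
  induction m with
  | zero => simp
  | succ m ih =>
    have hfne : ((f m : ℚ)) ≠ 0 := Nat.cast_ne_zero.2 (hf m)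
    have hgne : ((g m : ℚ)) ≠ 0 := Nat.cast_ne_zero.2 (hg m)
    have hterm : ((f m : ℚ) / (g m : ℚ)) ≠ 0 := div_ne_zero hfne hgne
    have hprod : (∏ j ∈ range m, ((f j : ℚ) / (g j : ℚ))) ≠ 0 :=
      Finset.prod_ne_zero_iff.2 fun j _ =>
        div_ne_zero (Nat.cast_ne_zero.2 (hf j)) (Nat.cast_ne_zero.2 (hg j))
    rw [Finset.prod_range_succ, Finset.sum_range_succ, padicValRat.mul hprod hterm, ih]
    congr 1
    rw [padicValRat.div hfne hgne, ← padicValRat_of_nat, ← padicValRat_of_nat]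

lemma my_val_Tp (n : ℕ) : padicValRat p (Tp p n) = nuZ p n := by
  unfold Tp nuZ
  exact my_val_prod hp (fun j => (p * j + 1)!) (fun j => (n + j)!) n
    (fun j => factorial_ne_zero _) (fun j => factorial_ne_zero _)

end Final

theorem stmt19 (p : ℕ) (hp : p.Prime) (hp3 : 3 ≤ p) :
    (∀ n : ℕ, 0 < n → ∃ z : ℤ, Tp p n = (z : ℚ)) ∧
    (∀ n : ℕ, 0 < n →
      (padicValRat p (Tp p (p * n)) : ℚ) =
        (p : ℚ) * padicValRat p (Tp p n) + (p : ℚ) * ((p : ℚ) - 3) * (n : ℚ) ^ 2 / 2) ∧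
    (∀ n : ℕ,
      (padicValRat p (Tp p (p ^ n)) : ℚ) =
        (p : ℚ) ^ n * ((p : ℚ) - 3) * ((p : ℚ) ^ n - 1) / (2 * ((p : ℚ) - 1))) := by
  have hp0 : 0 < p := hp.pos
  have part1 : ∀ n : ℕ, 0 < n → ∃ z : ℤ, Tp p n = (z : ℚ) := by
    intro n _
    obtain ⟨t, ht⟩ := my_dvd p hp hp3 n
    refine ⟨(t : ℤ), ?_⟩
    have hBne : (∏ j ∈ range n, (n + j)!) ≠ 0 :=
      Finset.prod_ne_zero_iff.2 fun j _ => factorial_ne_zero _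
    have hBQ : ((∏ j ∈ range n, (n + j)! : ℕ) : ℚ) ≠ 0 := Nat.cast_ne_zero.2 hBne
    have hTp : Tp p n
        = ((∏ j ∈ range n, (p * j + 1)! : ℕ) : ℚ) / ((∏ j ∈ range n, (n + j)! : ℕ) : ℚ) := by
      unfold Tp
      rw [Finset.prod_div_distrib, Nat.cast_prod, Nat.cast_prod]
    rw [hTp, ht]
    push_cast
    have hBQ2 : (∏ i ∈ range n, ((n + i)! : ℚ)) ≠ 0 :=
      Finset.prod_ne_zero_iff.2 fun j _ => Nat.cast_ne_zero.2 (factorial_ne_zero _)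
    field_simp
  have part2 : ∀ n : ℕ, 0 < n →
      (padicValRat p (Tp p (p * n)) : ℚ) =
        (p : ℚ) * padicValRat p (Tp p n) + (p : ℚ) * ((p : ℚ) - 3) * (n : ℚ) ^ 2 / 2 := by
    intro n _
    rw [my_val_Tp hp (p * n), my_val_Tp hp n]
    have hC := my_lemC hp hp3 n
    have hC' := congrArg (fun z : ℤ => (z : ℚ)) hC
    push_cast at hC'
    field_simp
    linarith [hC']
  refine ⟨part1, part2, ?_⟩
  intro n
  induction n with
  | zero =>
    have h1 : Tp p (p ^ 0) = 1 := by
      unfold Tp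
      simp
    rw [h1]
    simp
  | succ k ih =>
    have hpk : 0 < p ^ k := pow_pos hp0 k
    have h2 := part2 (p ^ k) hpk
    rw [show p ^ (k + 1) = p * p ^ k from by ring, h2, ih]
    have h3 : (3 : ℚ) ≤ (p : ℚ) := by exact_mod_cast hp3
    have hne : (p : ℚ) - 1 ≠ 0 := by
      intro h; linarith
    push_cast
    field_simp
    ring
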